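/- Let N be exponentially distributed with mean μ_N ∈ (0,∞) (density p_N(n) = μ_N^{-1} e^{−n/μ_N} for n ≥ 0), let G(x) = x, and fix β ∈ (0,∞). Then for every random variable X defined on the same probability space as N with X ≥ 0 almost surely, E X ≤ β, and such that X+N has a law absolutely continuous with respect to Lebesgue measure with well-defined differential entropy, one has h(X+N) ≤ ln(e·(μ_N+β)), and equality is attained by the (fully dependent) input X† = (β/μ_N)·N, for which X† is exponential with mean β and Y† = X†+N is exponential with mean μ_N+β. In particular sup{h(Y): Y ∈ Σ(N;G,β,[0,∞))} = ln(e·(μ_N+β)). -/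

import Mathlib

open MeasureTheory Real Filter Set
open scoped ENNReal Topology ProbabilityTheory

noncomputable section

variable {Ω : Type*} [MeasureSpace Ω]

/-- `Z` has a law absolutely continuous w.r.t. Lebesgue measure, with density `p`. -/
def HasDens (Z : Ω → ℝ) (p : ℝ → ℝ) : Prop :=
  Measurable Z ∧ Measurable p ∧ (∀ x, 0 ≤ p x) ∧
    Measure.map Z (ℙ : Measure Ω) = volume.withDensity (fun x => ENNReal.ofReal (p x))

/-- Differential entropy of a density: `h = -∫ p ln p`. -/
def dEnt (p : ℝ → ℝ) : ℝ := -∫ y, p y * Real.log (p y)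

/-- The differential entropy of the density `p` is well defined: `∫ p |ln p| < ∞`. -/
def EntWellDef (p : ℝ → ℝ) : Prop := Integrable (fun y => p y * Real.log (p y))

/-- The real points of the open interval `(a,b)` with extended-real endpoints. -/
def eIoo (a b : EReal) : Set ℝ := {x : ℝ | a < (x : EReal) ∧ (x : EReal) < b}

/-- The noise class `𝔑(a,b)`: `N` takes values in the closure of `(a,b)`, is integrable,
has a Lebesgue density `pN` which is `C¹` and strictly positive on `(a,b)` and vanishes
outside, and has well-defined differential entropy. -/
structure IsNoise (a b : EReal) (N : Ω → ℝ) (pN : ℝ → ℝ) : Prop where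
  prob : IsProbabilityMeasure (ℙ : Measure Ω)
  lt : a < b
  mem : ∀ᵐ ω ∂(ℙ : Measure Ω), a ≤ (N ω : EReal) ∧ (N ω : EReal) ≤ b
  int : Integrable N (ℙ : Measure Ω)
  dens : HasDens N pN
  smooth : ContDiffOn ℝ 1 pN (eIoo a b)
  pos : ∀ x ∈ eIoo a b, 0 < pN x
  zero : ∀ x ∉ eIoo a b, pN x = 0
  went : EntWellDef pN

/-- Cost function: `C¹`, convex, with derivative a.e. nonzero. -/
structure IsCost (G : ℝ → ℝ) : Prop where
  smooth : ContDiff ℝ 1 G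
  convex : ConvexOn ℝ Set.univ G
  dne : ∀ᵐ x ∂(volume : Measure ℝ), deriv G x ≠ 0

/-- `β ∈ I_G = (inf G, ∞)`, i.e. `β` is strictly above the infimum of `G`. -/
def InIG (G : ℝ → ℝ) (β : ℝ) : Prop := ∃ x, G x < β

/-- Admissible input: integrable, with integrable cost and average cost at most `β`. -/
def Admissible (G : ℝ → ℝ) (β : ℝ) (X : Ω → ℝ) : Prop :=
  Measurable X ∧ Integrable X (ℙ : Measure Ω) ∧
    Integrable (fun ω => G (X ω)) (ℙ : Measure Ω) ∧
    (∫ ω, G (X ω) ∂(ℙ : Measure Ω)) ≤ β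

/-- The set of achievable output entropies `{h(Y) : Y ∈ Σ(N;G,β)}` (joint couplings). -/
def SigmaEnt (N : Ω → ℝ) (G : ℝ → ℝ) (β : ℝ) : Set ℝ :=
  {h | ∃ (X : Ω → ℝ) (pY : ℝ → ℝ), Admissible G β X ∧
        HasDens (fun ω => X ω + N ω) pY ∧ EntWellDef pY ∧ h = dEnt pY}

/-- The set of achievable output entropies `{h(Y) : Y ∈ Σ_⊥(N;G,β)}` (independent input). -/
def SigmaEntIndep (N : Ω → ℝ) (G : ℝ → ℝ) (β : ℝ) : Set ℝ :=
  {h | ∃ (X : Ω → ℝ) (pY : ℝ → ℝ), Admissible G β X ∧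
        ProbabilityTheory.IndepFun X N (ℙ : Measure Ω) ∧
        HasDens (fun ω => X ω + N ω) pY ∧ EntWellDef pY ∧ h = dEnt pY}

/-- Achievable output entropies with an additional amplitude constraint `X ∈ s` a.s. -/
def SigmaEntAmp (N : Ω → ℝ) (G : ℝ → ℝ) (β : ℝ) (s : Set ℝ) : Set ℝ :=
  {h | ∃ (X : Ω → ℝ) (pY : ℝ → ℝ), Admissible G β X ∧
        (∀ᵐ ω ∂(ℙ : Measure Ω), X ω ∈ s) ∧
        HasDens (fun ω => X ω + N ω) pY ∧ EntWellDef pY ∧ h = dEnt pY}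

/-- The filter of real numbers approaching the extended-real endpoint `a` from the right. -/
def rightNhds (a : EReal) : Filter ℝ :=
  Filter.comap (fun x : ℝ => (x : EReal)) (nhdsWithin a (Set.Ioi a))

/-- The filter of real numbers approaching the extended-real endpoint `b` from the left. -/
def leftNhds (b : EReal) : Filter ℝ :=
  Filter.comap (fun x : ℝ => (x : EReal)) (nhdsWithin b (Set.Iio b))

/-- The hypotheses of Theorem 1: constants `C, λ > 0`, a `C¹` curve `g` with derivative `g'`
and a primitive `Φ` of `G' ∘ g`, satisfying the first integral of the Euler–Lagrange
equation, the natural boundary conditions, the isoperimetric constraint `E G(g(N)) = β`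
and `E|g(N)| < ∞`. -/
structure FirstIntegral (a b : EReal) (N : Ω → ℝ) (pN G : ℝ → ℝ) (β : ℝ)
    (C lam : ℝ) (g g' Φ : ℝ → ℝ) : Prop where
  hC : 0 < C
  hlam : 0 < lam
  hgmeas : Measurable g
  hg : ∀ n ∈ eIoo a b, HasDerivAt g (g' n) n
  hg' : ContinuousOn g' (eIoo a b)
  hΦ : ∀ n ∈ eIoo a b, HasDerivAt Φ (deriv G (g n)) n
  heq : ∀ n ∈ eIoo a b, pN n = C * (1 + g' n) * Real.exp (-(lam * (Φ n + G (g n))))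
  hbl : Filter.Tendsto (fun n => pN n / (1 + g' n))
    (rightNhds a ⊓ Filter.principal (eIoo a b)) (nhds 0)
  hbr : Filter.Tendsto (fun n => pN n / (1 + g' n))
    (leftNhds b ⊓ Filter.principal (eIoo a b)) (nhds 0)
  hGint : Integrable (fun ω => G (g (N ω))) (ℙ : Measure Ω)
  hcost : (∫ ω, G (g (N ω)) ∂(ℙ : Measure Ω)) = β
  hgint : Integrable (fun ω => g (N ω)) (ℙ : Measure Ω)

/-- Fourier transform of a finite Borel measure on `ℝ`: `F[μ](f) = ∫ e^{-2πifξ} dμ(ξ)`. -/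
def charF (μ : Measure ℝ) (f : ℝ) : ℂ :=
  ∫ ξ, Complex.exp (Complex.ofReal (-(2 * Real.pi * f * ξ)) * Complex.I) ∂μ

/-- Positive definiteness of a complex-valued function on `ℝ`: every Hermitian sum
`∑_{l,m} φ(f_l - f_m) z_l z̄_m` is a nonnegative real number. -/
def PosDefFn (φ : ℝ → ℂ) : Prop :=
  ∀ (n : ℕ) (f : Fin n → ℝ) (z : Fin n → ℂ),
    0 ≤ (∑ l, ∑ m, φ (f l - f m) * z l * (starRingEnd ℂ) (z m)).re ∧
    (∑ l, ∑ m, φ (f l - f m) * z l * (starRingEnd ℂ) (z m)).im = 0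




/-- Exponential density with mean `μ`. -/
def expD (μ : ℝ) (y : ℝ) : ℝ := if 0 ≤ y then μ⁻¹ * Real.exp (-(y / μ)) else 0

lemma expD_nonneg (μ : ℝ) (hμ : 0 < μ) (y : ℝ) : 0 ≤ expD μ y := by
  unfold expD; split <;> positivity

lemma measurable_expD (μ : ℝ) : Measurable (expD μ) := by
  unfold expD
  exact Measurable.ite measurableSet_Ici ((measurable_id.div_const μ).neg.exp.const_mul _)
    measurable_const

lemma expD_eq_indicator (μ : ℝ) :
    expD μ = (Set.Ici (0:ℝ)).indicator (fun y => μ⁻¹ * Real.exp (-(y / μ))) := by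
  funext y
  simp [expD, Set.indicator_apply, Set.mem_Ici]

lemma integrableOn_expD_aux {μ : ℝ} (hμ : 0 < μ) :
    IntegrableOn (fun y => μ⁻¹ * Real.exp (-(y / μ))) (Set.Ici (0:ℝ)) := by
  rw [integrableOn_Ici_iff_integrableOn_Ioi]
  have h := (exp_neg_integrableOn_Ioi 0 (inv_pos.mpr hμ)).const_mul μ⁻¹
  refine MeasureTheory.IntegrableOn.congr_fun h (fun y _ => ?_) measurableSet_Ioi
  rw [div_eq_inv_mul, neg_mul]

lemma integrable_expD {μ : ℝ} (hμ : 0 < μ) : Integrable (expD μ) := by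
  rw [expD_eq_indicator]
  exact (integrableOn_expD_aux hμ).integrable_indicator measurableSet_Ici

lemma integral_expD {μ : ℝ} (hμ : 0 < μ) : ∫ y, expD μ y = 1 := by
  rw [expD_eq_indicator, integral_indicator measurableSet_Ici,
    integral_Ici_eq_integral_Ioi]
  have : ∀ y : ℝ, μ⁻¹ * Real.exp (-(y / μ)) = (fun x => μ⁻¹ * Real.exp (-x)) (μ⁻¹ * y) := by
    intro y; rw [div_eq_inv_mul]
  rw [setIntegral_congr_fun measurableSet_Ioi (fun y _ => this y)]
  rw [integral_comp_mul_left_Ioi (fun x => μ⁻¹ * Real.exp (-x)) 0 (inv_pos.mpr hμ)]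
  rw [mul_zero, MeasureTheory.integral_const_mul, integral_exp_neg_Ioi_zero, smul_eq_mul]
  field_simp

lemma integrable_id_mul_expD {μ : ℝ} (hμ : 0 < μ) : Integrable (fun y => y * expD μ y) := by
  have : (fun y => y * expD μ y)
      = (Set.Ici (0:ℝ)).indicator (fun y => y * (μ⁻¹ * Real.exp (-(y / μ)))) := by
    funext y
    by_cases h : 0 ≤ y <;> simp [expD, Set.indicator_apply, Set.mem_Ici, h]
  rw [this]
  refine IntegrableOn.integrable_indicator ?_ measurableSet_Ici
  rw [integrableOn_Ici_iff_integrableOn_Ioi]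
  have h0 : IntegrableOn (fun x : ℝ => Real.exp (-x) * x ^ ((2:ℝ) - 1)) (Set.Ioi 0) :=
    Real.GammaIntegral_convergent (by norm_num)
  have h1 : IntegrableOn (fun y : ℝ => Real.exp (-(μ⁻¹ * y)) * (μ⁻¹ * y) ^ ((2:ℝ) - 1))
      (Set.Ioi 0) := by
    rw [integrableOn_Ioi_comp_mul_left_iff
      (fun x : ℝ => Real.exp (-x) * x ^ ((2:ℝ) - 1)) 0 (inv_pos.mpr hμ), mul_zero]
    exact h0
  refine MeasureTheory.IntegrableOn.congr_fun h1 (fun y _ => ?_) measurableSet_Ioi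
  have h2 : ((2:ℝ) - 1) = 1 := by norm_num
  rw [h2, Real.rpow_one, div_eq_inv_mul]
  ring

lemma integral_id_mul_expD {μ : ℝ} (hμ : 0 < μ) : ∫ y, y * expD μ y = μ := by
  have heq : (fun y => y * expD μ y)
      = (Set.Ici (0:ℝ)).indicator (fun y => y * (μ⁻¹ * Real.exp (-(y / μ)))) := by
    funext y
    by_cases h : 0 ≤ y <;> simp [expD, Set.indicator_apply, Set.mem_Ici, h]
  rw [heq, integral_indicator measurableSet_Ici, integral_Ici_eq_integral_Ioi]
  have h2 : ∀ y : ℝ, y * (μ⁻¹ * Real.exp (-(y / μ)))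
      = (fun x => Real.exp (-x) * x) (μ⁻¹ * y) := by
    intro y
    simp only
    rw [div_eq_inv_mul]
    ring
  rw [setIntegral_congr_fun measurableSet_Ioi (fun y _ => h2 y)]
  rw [integral_comp_mul_left_Ioi (fun x => Real.exp (-x) * x) 0 (inv_pos.mpr hμ)]
  have h3 : ∫ x in Set.Ioi (0:ℝ), Real.exp (-x) * x = 1 := by
    have := Real.Gamma_eq_integral (by norm_num : (0:ℝ) < 2)
    have h4 : Real.Gamma 2 = 1 := by
      rw [show (2:ℝ) = (1:ℕ)+1 by norm_num, Real.Gamma_nat_eq_factorial]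
      norm_num
    rw [h4] at this
    have h5 : ∀ x ∈ Set.Ioi (0:ℝ), Real.exp (-x) * x ^ ((2:ℝ)-1) = Real.exp (-x) * x := by
      intro x _
      norm_num
    rw [setIntegral_congr_fun measurableSet_Ioi h5] at this
    exact this.symm
  rw [mul_zero, h3, smul_eq_mul]
  field_simp


lemma expD_mul_log {μ : ℝ} (hμ : 0 < μ) :
    (fun y => expD μ y * Real.log (expD μ y)) =
      fun y => -Real.log μ * expD μ y - μ⁻¹ * (y * expD μ y) := by
  funext y
  by_cases h : 0 ≤ y
  · simp only [expD, if_pos h]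
    rw [Real.log_mul (by positivity) (Real.exp_ne_zero _), Real.log_exp, Real.log_inv]
    field_simp
    ring
  · simp [expD, h]

lemma integrable_expD_mul_log {μ : ℝ} (hμ : 0 < μ) :
    Integrable (fun y => expD μ y * Real.log (expD μ y)) := by
  rw [expD_mul_log hμ]
  exact ((integrable_expD hμ).const_mul _).sub ((integrable_id_mul_expD hμ).const_mul _)

lemma dEnt_expD {μ : ℝ} (hμ : 0 < μ) :
    -∫ y, expD μ y * Real.log (expD μ y) = Real.log (Real.exp 1 * μ) := by
  rw [expD_mul_log hμ,
    integral_sub ((integrable_expD hμ).const_mul _) ((integrable_id_mul_expD hμ).const_mul _),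
    MeasureTheory.integral_const_mul, MeasureTheory.integral_const_mul,
    integral_expD hμ, integral_id_mul_expD hμ,
    Real.log_mul (Real.exp_ne_zero 1) hμ.ne', Real.log_exp]
  field_simp
  ring

lemma gibbs (p : ℝ → ℝ) (hp0 : ∀ x, 0 ≤ p x) (hpint : Integrable p) (hp1 : ∫ y, p y = 1)
    (hsupp : ∀ᵐ y : ℝ, y < 0 → p y = 0) {μ : ℝ} (hμ : 0 < μ)
    (hmean_int : Integrable (fun y => y * p y)) (hmean : ∫ y, y * p y ≤ μ)
    (hwell : Integrable (fun y => p y * Real.log (p y))) :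
    -∫ y, p y * Real.log (p y) ≤ Real.log (Real.exp 1 * μ) := by
  set q := expD μ with hq
  have hlogq : (fun y => p y * Real.log (q y)) =ᵐ[volume]
      (fun y => -Real.log μ * p y - μ⁻¹ * (y * p y)) := by
    filter_upwards [hsupp] with y hy
    by_cases h : 0 ≤ y
    · simp only [hq, expD, if_pos h]
      rw [Real.log_mul (by positivity) (Real.exp_ne_zero _), Real.log_exp, Real.log_inv]
      field_simp
      ring
    · have hp : p y = 0 := hy (lt_of_not_ge h)
      simp [hp]
  have hint_plogq : Integrable (fun y => p y * Real.log (q y)) :=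
    ((hpint.const_mul (-Real.log μ)).sub (hmean_int.const_mul μ⁻¹)).congr hlogq.symm
  have key : ∀ᵐ y : ℝ ∂volume, p y * Real.log (q y) - p y * Real.log (p y) ≤ q y - p y := by
    filter_upwards [hsupp] with y hy
    by_cases hpy : p y = 0
    · simpa [hpy] using expD_nonneg μ hμ y
    · have hppos : 0 < p y := (hp0 y).lt_of_ne (Ne.symm hpy)
      have hy0 : 0 ≤ y := by
        by_contra h
        exact hpy (hy (lt_of_not_ge h))
      have hqpos : 0 < q y := by
        simp only [hq, expD, if_pos hy0]
        positivity
      have hlog : Real.log (q y) - Real.log (p y) = Real.log (q y / p y) :=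
        (Real.log_div hqpos.ne' hppos.ne').symm
      calc p y * Real.log (q y) - p y * Real.log (p y)
          = p y * Real.log (q y / p y) := by rw [← hlog]; ring
        _ ≤ p y * (q y / p y - 1) := by
            refine mul_le_mul_of_nonneg_left ?_ hppos.le
            exact Real.log_le_sub_one_of_pos (div_pos hqpos hppos)
        _ = q y - p y := by field_simp
  have hsum : ∫ y, (p y * Real.log (q y) - p y * Real.log (p y))
      ≤ ∫ y, (q y - p y) :=
    integral_mono_ae (hint_plogq.sub hwell) ((integrable_expD hμ).sub hpint) key
  rw [integral_sub hint_plogq hwell, integral_sub (integrable_expD hμ) hpint,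
    integral_expD hμ, hp1, sub_self] at hsum
  have hplogq : ∫ y, p y * Real.log (q y)
      = -Real.log μ * 1 - μ⁻¹ * ∫ y, y * p y := by
    rw [integral_congr_ae hlogq,
      integral_sub (hpint.const_mul _) (hmean_int.const_mul _),
      MeasureTheory.integral_const_mul, MeasureTheory.integral_const_mul, hp1]
  have hmono : μ⁻¹ * (∫ y, y * p y) ≤ μ⁻¹ * μ :=
    mul_le_mul_of_nonneg_left hmean (inv_nonneg.mpr hμ.le)
  rw [inv_mul_cancel₀ hμ.ne'] at hmono
  rw [Real.log_mul (Real.exp_ne_zero 1) hμ.ne', Real.log_exp]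
  rw [hplogq] at hsum
  linarith



lemma HasDens.lint_one {Z : Ω → ℝ} {p : ℝ → ℝ} [IsProbabilityMeasure (ℙ : Measure Ω)]
    (h : HasDens Z p) : ∫⁻ y, ENNReal.ofReal (p y) = 1 := by
  have h1 : Measure.map Z (ℙ : Measure Ω) Set.univ = 1 := by
    rw [Measure.map_apply h.1 MeasurableSet.univ]
    simp
  rw [h.2.2.2, withDensity_apply _ MeasurableSet.univ, Measure.restrict_univ] at h1
  exact h1

lemma HasDens.integrable_dens {Z : Ω → ℝ} {p : ℝ → ℝ} [IsProbabilityMeasure (ℙ : Measure Ω)]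
    (h : HasDens Z p) : Integrable p := by
  refine ⟨h.2.1.aestronglyMeasurable, ?_⟩
  rw [hasFiniteIntegral_iff_norm]
  have : ∀ y : ℝ, ENNReal.ofReal ‖p y‖ = ENNReal.ofReal (p y) := fun y => by
    rw [Real.norm_eq_abs, abs_of_nonneg (h.2.2.1 y)]
  rw [lintegral_congr this, h.lint_one]
  exact ENNReal.one_lt_top

lemma HasDens.integral_dens {Z : Ω → ℝ} {p : ℝ → ℝ} [IsProbabilityMeasure (ℙ : Measure Ω)]
    (h : HasDens Z p) : ∫ y, p y = 1 := by
  rw [integral_eq_lintegral_of_nonneg_ae (Filter.Eventually.of_forall h.2.2.1)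
    h.2.1.aestronglyMeasurable, h.lint_one]
  simp

lemma HasDens.integrable_iff {Z : Ω → ℝ} {p : ℝ → ℝ}
    (h : HasDens Z p) : Integrable Z (ℙ : Measure Ω) ↔ Integrable (fun y => y * p y) := by
  have h1 : Integrable Z (ℙ : Measure Ω) ↔ Integrable id (Measure.map Z (ℙ : Measure Ω)) :=
    (integrable_map_measure aestronglyMeasurable_id h.1.aemeasurable).symm
  rw [h.2.2.2] at h1
  rw [h1, integrable_withDensity_iff h.2.1.ennreal_ofReal
    (Filter.Eventually.of_forall fun x => ENNReal.ofReal_lt_top)]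
  constructor <;> intro hx <;> refine hx.congr (Filter.Eventually.of_forall fun y => ?_) <;>
    simp [ENNReal.toReal_ofReal (h.2.2.1 y)]

lemma HasDens.integral_eq {Z : Ω → ℝ} {p : ℝ → ℝ}
    (h : HasDens Z p) : ∫ ω, Z ω ∂(ℙ : Measure Ω) = ∫ y, y * p y := by
  have h1 : ∫ ω, Z ω ∂(ℙ : Measure Ω) = ∫ y, id y ∂(Measure.map Z (ℙ : Measure Ω)) :=
    (integral_map h.1.aemeasurable aestronglyMeasurable_id).symm
  rw [h1, h.2.2.2]
  rw [show (fun x : ℝ => ENNReal.ofReal (p x)) = fun x : ℝ => ((Real.toNNReal (p x)) : ℝ≥0∞)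
    from rfl]
  rw [integral_withDensity_eq_integral_smul
    (show Measurable fun x => Real.toNNReal (p x) from measurable_real_toNNReal.comp h.2.1) id]
  refine integral_congr_ae (Filter.Eventually.of_forall fun y => ?_)
  simp [NNReal.smul_def, Real.coe_toNNReal _ (h.2.2.1 y), mul_comm]

lemma HasDens.dens_ae_zero_neg {Z : Ω → ℝ} {p : ℝ → ℝ}
    (h : HasDens Z p) (hZ : ∀ᵐ ω ∂(ℙ : Measure Ω), 0 ≤ Z ω) :
    ∀ᵐ y : ℝ, y < 0 → p y = 0 := by
  have h0 : Measure.map Z (ℙ : Measure Ω) (Set.Iio 0) = 0 := by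
    rw [Measure.map_apply h.1 measurableSet_Iio]
    rw [ae_iff] at hZ
    convert hZ using 2
    ext ω
    simp [not_le]
  rw [h.2.2.2, withDensity_apply _ measurableSet_Iio] at h0
  have h2 := (lintegral_eq_zero_iff h.2.1.ennreal_ofReal).mp h0
  rw [Filter.EventuallyEq, ae_restrict_iff' measurableSet_Iio] at h2
  filter_upwards [h2] with y hy hy0
  have := hy hy0
  simp only [Pi.zero_apply, ENNReal.ofReal_eq_zero] at this
  exact le_antisymm this (h.2.2.1 y)

lemma HasDens.ae_nonneg {Z : Ω → ℝ} {p : ℝ → ℝ}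
    (h : HasDens Z p) (hneg : ∀ y < (0:ℝ), p y = 0) :
    ∀ᵐ ω ∂(ℙ : Measure Ω), 0 ≤ Z ω := by
  have h0 : Measure.map Z (ℙ : Measure Ω) (Set.Iio 0) = 0 := by
    rw [h.2.2.2, withDensity_apply _ measurableSet_Iio]
    rw [setLIntegral_congr_fun measurableSet_Iio
      (fun y hy => by
        rw [hneg y hy, ENNReal.ofReal_zero] : _)]
    simp
  rw [Measure.map_apply h.1 measurableSet_Iio] at h0
  rw [ae_iff]
  convert h0 using 2
  ext ω
  simp [not_le]

lemma map_withDensity_mequiv (e : ℝ ≃ᵐ ℝ) (f : ℝ → ℝ≥0∞) (hf : Measurable f) (μ : Measure ℝ) :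
    Measure.map e (μ.withDensity f) = (Measure.map e μ).withDensity (fun y => f (e.symm y)) := by
  ext s hs
  rw [Measure.map_apply e.measurable hs, withDensity_apply _ (e.measurable hs),
    withDensity_apply _ hs,
    setLIntegral_map hs (show Measurable fun y => f (e.symm y) from hf.comp e.symm.measurable)
      e.measurable]
  refine lintegral_congr fun x => ?_
  rw [e.symm_apply_apply]

lemma map_const_mul_withDensity {c : ℝ} (hc : 0 < c) (p : ℝ → ℝ) (hp : Measurable p)
    (hp0 : ∀ x, 0 ≤ p x) :
    Measure.map (fun x => c * x) (volume.withDensity fun x => ENNReal.ofReal (p x))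
      = volume.withDensity (fun y => ENNReal.ofReal (c⁻¹ * p (c⁻¹ * y))) := by
  set e : ℝ ≃ᵐ ℝ := (Homeomorph.mulLeft₀ c hc.ne').toMeasurableEquiv with he
  have hce : (fun x : ℝ => c * x) = ⇑e := by
    funext x; rfl
  have hsymm : ∀ y : ℝ, e.symm y = c⁻¹ * y := by
    intro y
    have h1 : e (c⁻¹ * y) = y := by
      show c * (c⁻¹ * y) = y
      field_simp
    have := congrArg e.symm h1
    rwa [e.symm_apply_apply] at this
  rw [hce, map_withDensity_mequiv e _ hp.ennreal_ofReal volume]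
  have hmap : Measure.map e volume = ENNReal.ofReal |c⁻¹| • volume := by
    rw [← hce, Real.map_volume_mul_left hc.ne']
  rw [hmap, withDensity_smul_measure]
  rw [← withDensity_smul _
    (show Measurable fun y => ENNReal.ofReal (p (e.symm y))
      from (hp.comp e.symm.measurable).ennreal_ofReal)]
  refine withDensity_congr_ae (Filter.Eventually.of_forall fun y => ?_)
  simp only [Pi.smul_apply, smul_eq_mul, hsymm y]
  rw [ENNReal.ofReal_mul (inv_nonneg.mpr hc.le), abs_of_pos (inv_pos.mpr hc)]


lemma expD_scale {μ c : ℝ} (hμ : 0 < μ) (hc : 0 < c) :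
    (fun y => c⁻¹ * expD μ (c⁻¹ * y)) = expD (c * μ) := by
  funext y
  unfold expD
  by_cases h : 0 ≤ y
  · have h1 : 0 ≤ c⁻¹ * y := mul_nonneg (inv_pos.mpr hc).le h
    rw [if_pos h1, if_pos h]
    have h2 : c⁻¹ * y / μ = y / (c * μ) := by
      field_simp
    rw [h2, mul_inv]
    ring
  · have h1 : ¬ 0 ≤ c⁻¹ * y := by
      rw [not_le] at h ⊢
      exact mul_neg_of_pos_of_neg (inv_pos.mpr hc) h
    rw [if_neg h1, if_neg h, mul_zero]

lemma HasDens.const_mul {Ω : Type*} [MeasureSpace Ω] {N : Ω → ℝ} {p : ℝ → ℝ}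
    (h : HasDens N p) {c : ℝ} (hc : 0 < c) :
    HasDens (fun ω => c * N ω) (fun y => c⁻¹ * p (c⁻¹ * y)) := by
  refine ⟨measurable_const.mul h.1,
    (h.2.1.comp (measurable_const_mul c⁻¹)).const_mul c⁻¹,
    fun y => mul_nonneg (inv_nonneg.mpr hc.le) (h.2.2.1 _), ?_⟩
  have h0 : (fun ω => c * N ω) = (fun x : ℝ => c * x) ∘ N := rfl
  rw [h0, ← Measure.map_map (measurable_const_mul c) h.1, h.2.2.2,
    map_const_mul_withDensity hc p h.2.1 h.2.2.1]


/-- exponential noise, linear cost, amplitude constraint `X ≥ 0`: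
for `N ~ exp(μ_N⁻¹)` and budget `β > 0`, every nonnegative input with `E X ≤ β` gives
`h(X+N) ≤ ln(e(μ_N+β))`, with equality for the dependent input `X† = (β/μ_N)·N`, for
which `X†` is exponential with mean `β` and `Y† = X†+N` is exponential with mean
`μ_N+β`; in particular `sup{h(Y) : Y ∈ Σ(N;x,β,[0,∞))} = ln(e(μ_N+β))`. -/
theorem exponential_noise_linear_cost
    {Ω : Type*} [MeasureSpace Ω] [IsProbabilityMeasure (ℙ : Measure Ω)]
    (N : Ω → ℝ) (m : ℝ) (hm : 0 < m)
    (hN : HasDens N (fun n => if 0 ≤ n then m⁻¹ * Real.exp (-(n / m)) else 0))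
    (β : ℝ) (hβ : 0 < β) :
    (∀ (X : Ω → ℝ) (pY : ℝ → ℝ), Measurable X → Integrable X (ℙ : Measure Ω) →
      (∀ᵐ ω ∂(ℙ : Measure Ω), 0 ≤ X ω) → (∫ ω, X ω ∂(ℙ : Measure Ω)) ≤ β →
      HasDens (fun ω => X ω + N ω) pY → EntWellDef pY →
      dEnt pY ≤ Real.log (Real.exp 1 * (m + β))) ∧
    HasDens (fun ω => (β / m) * N ω)
      (fun n => if 0 ≤ n then β⁻¹ * Real.exp (-(n / β)) else 0) ∧
    (∫ ω, (β / m) * N ω ∂(ℙ : Measure Ω)) = β ∧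
    HasDens (fun ω => (β / m) * N ω + N ω)
      (fun n => if 0 ≤ n then (m + β)⁻¹ * Real.exp (-(n / (m + β))) else 0) ∧
    dEnt (fun n => if 0 ≤ n then (m + β)⁻¹ * Real.exp (-(n / (m + β))) else 0) =
      Real.log (Real.exp 1 * (m + β)) ∧
    sSup (SigmaEntAmp N (fun x => x) β (Set.Ici 0)) = Real.log (Real.exp 1 * (m + β)) := by
  
  have hmβ : (0:ℝ) < m + β := by linarith
  have hNd : HasDens N (expD m) := hN
  have hNnn : ∀ᵐ ω ∂(ℙ : Measure Ω), 0 ≤ N ω :=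
    hNd.ae_nonneg (fun y hy => if_neg (not_le.mpr hy))
  have hNint : Integrable N (ℙ : Measure Ω) :=
    hNd.integrable_iff.mpr (integrable_id_mul_expD hm)
  have hNmean : ∫ ω, N ω ∂(ℙ : Measure Ω) = m := by
    rw [hNd.integral_eq]
    exact integral_id_mul_expD hm
  have hc : 0 < β / m := div_pos hβ hm
  -- Part 1: the entropy bound
  have hub : ∀ (X : Ω → ℝ) (pY : ℝ → ℝ), Measurable X → Integrable X (ℙ : Measure Ω) →
      (∀ᵐ ω ∂(ℙ : Measure Ω), 0 ≤ X ω) → (∫ ω, X ω ∂(ℙ : Measure Ω)) ≤ β →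
      HasDens (fun ω => X ω + N ω) pY → EntWellDef pY →
      dEnt pY ≤ Real.log (Real.exp 1 * (m + β)) := by
    intro X pY _ hXint hXnn hXmean hYdens hYwell
    have hYnn : ∀ᵐ ω ∂(ℙ : Measure Ω), 0 ≤ X ω + N ω := by
      filter_upwards [hXnn, hNnn] with ω h1 h2
      exact add_nonneg h1 h2
    have hsupp : ∀ᵐ y : ℝ, y < 0 → pY y = 0 := hYdens.dens_ae_zero_neg hYnn
    have hYint : Integrable (fun ω => X ω + N ω) (ℙ : Measure Ω) := hXint.add hNint
    have hmean_int : Integrable (fun y => y * pY y) := hYdens.integrable_iff.mp hYint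
    have hmean_le : ∫ y, y * pY y ≤ m + β := by
      rw [← hYdens.integral_eq, integral_add hXint hNint, hNmean]
      linarith
    exact gibbs pY hYdens.2.2.1 hYdens.integrable_dens hYdens.integral_dens hsupp hmβ
      hmean_int hmean_le hYwell
  -- Part 2: density of (β/m) • N
  have hXd : HasDens (fun ω => (β / m) * N ω) (expD β) := by
    have h2 := hNd.const_mul hc
    rwa [expD_scale hm hc, div_mul_cancel₀ β hm.ne'] at h2
  -- Part 3: mean of (β/m) • N
  have hXmean : (∫ ω, (β / m) * N ω ∂(ℙ : Measure Ω)) = β := by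
    rw [MeasureTheory.integral_const_mul, hNmean, div_mul_cancel₀ β hm.ne']
  -- Part 4: density of the output
  have hYd : HasDens (fun ω => (β / m) * N ω + N ω) (expD (m + β)) := by
    have hc2 : 0 < (m + β) / m := div_pos hmβ hm
    have h2 := hNd.const_mul hc2
    rw [expD_scale hm hc2, div_mul_cancel₀ (m + β) hm.ne'] at h2
    have h3 : (fun ω => (β / m) * N ω + N ω) = (fun ω => ((m + β) / m) * N ω) := by
      funext ω
      field_simp
      ring
    rwa [h3]
  -- Part 5: entropy of the output
  have hEnt : dEnt (expD (m + β)) = Real.log (Real.exp 1 * (m + β)) := by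
    unfold dEnt
    exact dEnt_expD hmβ
  refine ⟨hub, hXd, hXmean, hYd, hEnt, ?_⟩
  -- Part 6: the supremum
  apply IsGreatest.csSup_eq
  constructor
  · refine ⟨fun ω => (β / m) * N ω, expD (m + β),
      ⟨measurable_const.mul hNd.1, hNint.const_mul _, hNint.const_mul _, le_of_eq hXmean⟩,
      ?_, hYd, integrable_expD_mul_log hmβ, hEnt.symm⟩
    filter_upwards [hNnn] with ω h1
    exact mul_nonneg hc.le h1
  · rintro h ⟨X, pY, hadm, hamp, hdens, hwell, rfl⟩
    exact hub X pY hadm.1 hadm.2.1 (hamp.mono fun ω h => h) hadm.2.2.2 hdens hwell
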